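/- For the autonomous Lagrangian L_a(x,y,ẋ,ẏ) = (1/2)ẋ² + 1 − cos(2πx) + (1/2)(ẏ−c)² on 𝕋² = ℝ²/ℤ² and the function u_δ with 0 < δ < 1/2: T_t u_δ(π(0,1/2)) → 0 as t → +∞, yet there exists a sequence t_n → +∞ such that T_{t_n} u_δ(π(0,1/2)) ≥ δ²/(32 t_n) for every n; hence the convergence of the Lax–Oleinik semigroup at the point π(0,1/2) is not faster than O(1/t). -/

import Mathlib

open Set Filter MeasureTheory

noncomputable section

/-- The two-torus `𝕋² = ℝ²/ℤ²`. -/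
abbrev T2 : Type := AddCircle (1 : ℝ) × AddCircle (1 : ℝ)

/-- The quotient map `π : ℝ² → 𝕋²`. -/
def p2 (q : ℝ × ℝ) : T2 := ((q.1 : AddCircle (1 : ℝ)), (q.2 : AddCircle (1 : ℝ)))

/-- `γ` is continuous and piecewise `C¹` on `[a,b]`. -/
def PiecewiseC1On {E : Type*} [NormedAddCommGroup E] [NormedSpace ℝ E]
    (γ : ℝ → E) (a b : ℝ) : Prop :=
  ContinuousOn γ (Set.Icc a b) ∧
  ∃ (N : ℕ) (p : Fin (N + 1) → ℝ), p 0 = a ∧ p (Fin.last N) = b ∧ Monotone p ∧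
    ∀ i : Fin N, ContDiffOn ℝ 1 γ (Set.Icc (p i.castSucc) (p i.succ))

/-- The Lagrangian `L_a(x,y,ẋ,ẏ) = ẋ²/2 + 1 − cos(2πx) + (ẏ−c)²/2`. -/
def La (c : ℝ) (q v : ℝ × ℝ) : ℝ :=
  (1 / 2) * v.1 ^ 2 + 1 - Real.cos (2 * Real.pi * q.1) + (1 / 2) * (v.2 - c) ^ 2

/-- The action of a curve for `L_a` on `[a,b]`. -/
def actionA (c : ℝ) (γ : ℝ → ℝ × ℝ) (a b : ℝ) : ℝ :=
  ∫ s in a..b, La c (γ s) (deriv γ s)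

/-- The Lax–Oleinik semigroup `T_t u (q)` for `L_a`. -/
def Tlo (c t : ℝ) (u : T2 → ℝ) (q : T2) : ℝ :=
  sInf {A : ℝ | ∃ γ : ℝ → ℝ × ℝ, PiecewiseC1On γ 0 t ∧ p2 (γ t) = q ∧
    A = u (p2 (γ 0)) + actionA c γ 0 t}

/-- `F_t(q,q')`: minimal action among curves from `q` to `q'` in time `t`. -/
def Fa (c t : ℝ) (q q' : T2) : ℝ :=
  sInf {A : ℝ | ∃ γ : ℝ → ℝ × ℝ, PiecewiseC1On γ 0 t ∧ p2 (γ 0) = q ∧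
    p2 (γ t) = q' ∧ A = actionA c γ 0 t}

/-- The Peierls barrier `h(q,q') = liminf_{t→+∞} F_t(q,q')`, written as
`sup over T of inf over t ≥ T`. -/
def hA (c : ℝ) (q q' : T2) : ℝ :=
  sSup {r : ℝ | ∃ T : ℝ, r = sInf {A : ℝ | ∃ t : ℝ, 0 < t ∧ T ≤ t ∧ A = Fa c t q q'}}

/-- The circle `{0} × 𝕊¹ ⊆ 𝕋²`. -/
def circ0 : Set T2 := {q : T2 | ∃ yt : ℝ, q = p2 (0, yt)}

/-- The function `u_δ(π(x̃,ỹ)) = max(δ − dist(ỹ − 1/2, ℤ), 0)`. -/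
def udelta (δ : ℝ) (q : T2) : ℝ :=
  max (δ - ‖q.2 - ((1 / 2 : ℝ) : AddCircle (1 : ℝ))‖) 0


section AuxProofs
open intervalIntegral
open scoped Interval

lemma la_nonneg (c : ℝ) (q v : ℝ × ℝ) : 0 ≤ La c q v := by
  have := Real.cos_le_one (2 * Real.pi * q.1)
  unfold La; nlinarith [sq_nonneg v.1, sq_nonneg (v.2 - c)]

lemma la_cont (c : ℝ) : Continuous fun p : (ℝ × ℝ) × (ℝ × ℝ) => La c p.1 p.2 := by
  unfold La; fun_prop

lemma II_same (F : ℝ → ℝ) (a : ℝ) : IntervalIntegrable F volume a a := by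
  rw [intervalIntegrable_iff]
  simp

lemma piece_facts (c : ℝ) {γ : ℝ → ℝ × ℝ} {a b : ℝ} (hab : a ≤ b)
    (h : ContDiffOn ℝ 1 γ (Set.Icc a b)) :
    IntervalIntegrable (fun s => (deriv γ s).2) volume a b ∧
    ((∫ s in a..b, (deriv γ s).2) = (γ b).2 - (γ a).2) ∧
    IntervalIntegrable (fun s => La c (γ s) (deriv γ s)) volume a b := by
  rcases eq_or_lt_of_le hab with rfl | hlt
  · exact ⟨II_same _ _, by simp, II_same _ _⟩
  have hud : UniqueDiffOn ℝ (Icc a b) := uniqueDiffOn_Icc hlt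
  set φ : ℝ → ℝ × ℝ := derivWithin γ (Icc a b) with hφ
  have hφc : ContinuousOn φ (Icc a b) := h.continuousOn_derivWithin hud le_rfl
  have heq : ∀ x ∈ Ioo a b, deriv γ x = φ x := by
    intro x hx
    exact (derivWithin_of_mem_nhds (Icc_mem_nhds hx.1 hx.2)).symm
  have hd : ∀ x ∈ Ioo a b, HasDerivAt γ (φ x) x := by
    intro x hx
    have hmem : Icc a b ∈ nhds x := Icc_mem_nhds hx.1 hx.2
    have hda := ((h.differentiableOn one_ne_zero) x (Ioo_subset_Icc_self hx)).differentiableAt hmem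
    have := hda.hasDerivAt
    rwa [heq x hx] at this
  have hφi : IntervalIntegrable φ volume a b := by
    apply ContinuousOn.intervalIntegrable
    rwa [uIcc_of_le hab]
  have haeb : ∀ᵐ x ∂(volume : Measure ℝ), x ≠ b := by
    rw [ae_iff]
    simp only [ne_eq, not_not, Set.setOf_eq_eq_singleton]
    exact Real.volume_singleton
  have hae : ∀ᵐ x ∂(volume : Measure ℝ), x ∈ Ι a b → deriv γ x = φ x := by
    filter_upwards [haeb] with x hxb hxI
    rw [uIoc_of_le hab] at hxI
    exact heq x ⟨hxI.1, lt_of_le_of_ne hxI.2 hxb⟩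
  -- integrability of second component of deriv
  have h2cont : ContinuousOn (fun s => (φ s).2) (uIcc a b) := by
    rw [uIcc_of_le hab]; exact continuous_snd.comp_continuousOn hφc
  have h2i : IntervalIntegrable (fun s => (φ s).2) volume a b := h2cont.intervalIntegrable
  have h2ae : (fun s => (φ s).2) =ᵐ[volume.restrict (Ι a b)] (fun s => (deriv γ s).2) := by
    apply (ae_restrict_iff' measurableSet_uIoc).2
    filter_upwards [hae] with x hx hmem
    rw [hx hmem]
  have h2 : IntervalIntegrable (fun s => (deriv γ s).2) volume a b := by
    rw [intervalIntegrable_iff] at h2i ⊢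
    exact h2i.congr h2ae
  refine ⟨h2, ?_, ?_⟩
  · have hcongr : (∫ s in a..b, (deriv γ s).2) = ∫ s in a..b, (φ s).2 := by
      apply intervalIntegral.integral_congr_ae
      filter_upwards [hae] with x hx hmem
      rw [hx hmem]
    have hd2 : ∀ x ∈ Ioo a b, HasDerivAt (fun s => (γ s).2) ((φ x).2) x := by
      intro x hx
      have := ((hd x hx).hasFDerivAt.snd).hasDerivAt
      simpa using this
    have hFTC2 : (∫ s in a..b, (φ s).2) = (γ b).2 - (γ a).2 :=
      integral_eq_sub_of_hasDeriv_right_of_le hab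
        (continuous_snd.comp_continuousOn h.continuousOn)
        (fun x hx => (hd2 x hx).hasDerivWithinAt) h2i
    rw [hcongr, hFTC2]
  · have hLcont : ContinuousOn (fun s => La c (γ s) (φ s)) (uIcc a b) := by
      rw [uIcc_of_le hab]
      have h1 : ContinuousOn γ (Icc a b) := h.continuousOn
      unfold La
      fun_prop
    have hLi : IntervalIntegrable (fun s => La c (γ s) (φ s)) volume a b := hLcont.intervalIntegrable
    have hLae : (fun s => La c (γ s) (φ s)) =ᵐ[volume.restrict (Ι a b)]
        (fun s => La c (γ s) (deriv γ s)) := by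
      apply (ae_restrict_iff' measurableSet_uIoc).2
      filter_upwards [hae] with x hx hmem
      rw [hx hmem]
    rw [intervalIntegrable_iff] at hLi ⊢
    exact hLi.congr hLae

lemma glueII {N : ℕ} {p : Fin (N + 1) → ℝ} (F : ℝ → ℝ)
    (hII : ∀ i : Fin N, IntervalIntegrable F volume (p i.castSucc) (p i.succ)) :
    IntervalIntegrable F volume (p 0) (p (Fin.last N)) := by
  suffices key : ∀ n : ℕ, ∀ h : n ≤ N,
      IntervalIntegrable F volume (p 0) (p ⟨n, Nat.lt_succ_of_le h⟩) by
    have := key N le_rfl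
    simpa [Fin.last] using this
  intro n
  induction n with
  | zero =>
    intro h
    exact II_same F (p 0)
  | succ n ih =>
    intro h
    have hn := ih (Nat.le_of_succ_le h)
    have hi := hII ⟨n, Nat.lt_of_succ_le h⟩
    simp only [Fin.castSucc_mk, Fin.succ_mk] at hi
    exact hn.trans hi

lemma glue {N : ℕ} {p : Fin (N + 1) → ℝ} (F G : ℝ → ℝ)
    (hII : ∀ i : Fin N, IntervalIntegrable F volume (p i.castSucc) (p i.succ))
    (hInt : ∀ i : Fin N,
      (∫ s in (p i.castSucc)..(p i.succ), F s) = G (p i.succ) - G (p i.castSucc)) :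
    IntervalIntegrable F volume (p 0) (p (Fin.last N)) ∧
    ((∫ s in (p 0)..(p (Fin.last N)), F s) = G (p (Fin.last N)) - G (p 0)) := by
  suffices key : ∀ n : ℕ, ∀ h : n ≤ N,
      IntervalIntegrable F volume (p 0) (p ⟨n, Nat.lt_succ_of_le h⟩) ∧
      ((∫ s in (p 0)..(p ⟨n, Nat.lt_succ_of_le h⟩), F s) =
        G (p ⟨n, Nat.lt_succ_of_le h⟩) - G (p 0)) by
    have := key N le_rfl
    simpa [Fin.last] using this
  intro n
  induction n with
  | zero =>
    intro h
    have h0 : (⟨0, Nat.lt_succ_of_le h⟩ : Fin (N + 1)) = 0 := rfl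
    rw [h0]
    exact ⟨II_same _ _, by simp⟩
  | succ n ih =>
    intro h
    have hn := ih (Nat.le_of_succ_le h)
    have hi := hII ⟨n, Nat.lt_of_succ_le h⟩
    have hi' := hInt ⟨n, Nat.lt_of_succ_le h⟩
    simp only [Fin.castSucc_mk, Fin.succ_mk] at hi hi'
    refine ⟨hn.1.trans hi, ?_⟩
    rw [← intervalIntegral.integral_add_adjacent_intervals hn.1 hi, hn.2, hi']
    ring

lemma action_facts (c : ℝ) {γ : ℝ → ℝ × ℝ} {t : ℝ} (hγ : PiecewiseC1On γ 0 t) :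
    IntervalIntegrable (fun s => La c (γ s) (deriv γ s)) volume 0 t ∧
    IntervalIntegrable (fun s => (deriv γ s).2) volume 0 t ∧
    ((∫ s in (0:ℝ)..t, (deriv γ s).2) = (γ t).2 - (γ 0).2) := by
  obtain ⟨hcont, N, p, hp0, hpN, hmono, hC⟩ := hγ
  have pf := fun i : Fin N =>
    piece_facts c (hmono (Fin.castSucc_lt_succ (i := i)).le) (hC i)
  have g1 := glue (fun s => (deriv γ s).2) (fun x => (γ x).2)
    (fun i => (pf i).1) (fun i => (pf i).2.1)
  have g2 := glueII (fun s => La c (γ s) (deriv γ s)) (fun i => (pf i).2.2)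
  rw [hp0, hpN] at g1 g2
  exact ⟨g2, g1.1, g1.2⟩

lemma action_lb (c : ℝ) {γ : ℝ → ℝ × ℝ} {t : ℝ} (ht : 0 < t)
    (hγ : PiecewiseC1On γ 0 t) :
    ((γ t).2 - (γ 0).2 - c * t) ^ 2 / (2 * t) ≤ ∫ s in (0:ℝ)..t, La c (γ s) (deriv γ s) := by
  obtain ⟨hLa, h2, hFTC⟩ := action_facts c hγ
  set D : ℝ := (γ t).2 - (γ 0).2 - c * t with hD
  set m : ℝ := D / t with hm
  have hlhsII : IntervalIntegrable (fun s => m * ((deriv γ s).2 - c) - m ^ 2 / 2) volume 0 t :=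
    ((h2.sub (intervalIntegrable_const)).const_mul m).sub intervalIntegrable_const
  have hmono : (∫ s in (0:ℝ)..t, (m * ((deriv γ s).2 - c) - m ^ 2 / 2)) ≤
      ∫ s in (0:ℝ)..t, La c (γ s) (deriv γ s) := by
    apply intervalIntegral.integral_mono_on ht.le hlhsII hLa
    intro s _
    have := Real.cos_le_one (2 * Real.pi * (γ s).1)
    unfold La
    nlinarith [sq_nonneg ((deriv γ s).2 - c - m), sq_nonneg (deriv γ s).1]
  have hcomp : (∫ s in (0:ℝ)..t, (m * ((deriv γ s).2 - c) - m ^ 2 / 2)) = D ^ 2 / (2 * t) := by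
    rw [intervalIntegral.integral_sub (((h2.sub intervalIntegrable_const).const_mul m)) intervalIntegrable_const]
    rw [intervalIntegral.integral_const_mul]
    rw [intervalIntegral.integral_sub h2 intervalIntegrable_const]
    rw [hFTC]
    simp only [intervalIntegral.integral_const, smul_eq_mul, sub_zero]
    rw [hm]
    field_simp
    ring
  linarith

lemma norm_addCircle_le (x : ℝ) : ‖(x : AddCircle (1 : ℝ))‖ ≤ |x| :=
  (QuotientAddGroup.norm_mk_le_norm (m := x)).trans_eq (Real.norm_eq_abs x)

lemma coe_int_zero (k : ℤ) : ((k : ℝ) : AddCircle (1 : ℝ)) = 0 :=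
  (AddCircle.coe_eq_zero_iff 1).2 ⟨k, by simp⟩

lemma norm_half : ‖((1 / 2 : ℝ) : AddCircle (1 : ℝ))‖ = 1 / 2 := by
  rw [AddCircle.norm_eq]
  norm_num [round_eq]

-- elements of the Tlo set are nonnegative
lemma set_nonneg {c t δ : ℝ} (ht : 0 ≤ t) {A : ℝ} {q : T2}
    (hA : A ∈ {A : ℝ | ∃ γ : ℝ → ℝ × ℝ, PiecewiseC1On γ 0 t ∧ p2 (γ t) = q ∧
      A = udelta δ (p2 (γ 0)) + actionA c γ 0 t}) : 0 ≤ A := by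
  obtain ⟨γ, hγ, hend, rfl⟩ := hA
  have h1 : 0 ≤ udelta δ (p2 (γ 0)) := le_max_right _ _
  have h2 : 0 ≤ actionA c γ 0 t :=
    intervalIntegral.integral_nonneg ht (fun s _ => la_nonneg c (γ s) (deriv γ s))
  linarith

-- existence of a cheap curve
lemma exists_cheap (c δ : ℝ) (hδ : δ < 1 / 2) {t : ℝ} (ht : 0 < t) :
    ∃ A ∈ {A : ℝ | ∃ γ : ℝ → ℝ × ℝ, PiecewiseC1On γ 0 t ∧ p2 (γ t) = p2 (0, 1 / 2) ∧
      A = udelta δ (p2 (γ 0)) + actionA c γ 0 t}, A ≤ (8 * t)⁻¹ := by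
  set K : ℤ := round (c * t - 1 / 2) with hK
  set v : ℝ := (1 / 2 + K - c * t) / t with hv
  set γ : ℝ → ℝ × ℝ := fun s => (0, (c + v) * s) with hγdef
  have hd : ∀ s : ℝ, HasDerivAt γ (0, c + v) s := by
    intro s
    apply HasDerivAt.prodMk (hasDerivAt_const s (0:ℝ))
    simpa using (hasDerivAt_id s).const_mul (c + v)
  have hderiv : deriv γ = fun _ => ((0 : ℝ), c + v) := funext fun s => (hd s).deriv
  have hcont : Continuous γ := by
    apply Continuous.prodMk continuous_const
    exact continuous_const.mul continuous_id
  have hsmooth : ContDiff ℝ 1 γ := by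
    apply ContDiff.prodMk contDiff_const
    exact contDiff_const.mul contDiff_id
  have hpc1 : PiecewiseC1On γ 0 t := by
    refine ⟨hcont.continuousOn, 1, ![0, t], by simp, by simp [Fin.last], ?_, ?_⟩
    · intro i j hij
      fin_cases i <;> fin_cases j <;>
        simp_all <;> first | exact le_rfl | exact ht.le | exact absurd hij (by decide)
    · intro i
      exact hsmooth.contDiffOn
  have hvt : v * t = 1 / 2 + K - c * t := by
    rw [hv]; field_simp
  have hend : p2 (γ t) = p2 (0, 1 / 2) := by
    unfold p2
    simp only [hγdef]
    refine Prod.ext rfl ?_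
    show (((c + v) * t : ℝ) : AddCircle (1:ℝ)) = ((1 / 2 : ℝ) : AddCircle (1:ℝ))
    have h1 : (c + v) * t = 1 / 2 + (K : ℝ) := by rw [add_mul, hvt]; ring
    rw [h1, show ((1:ℝ)/2 + (K:ℝ)) = (1/2 : ℝ) + (K:ℝ) from rfl]
    rw [QuotientAddGroup.mk_add, coe_int_zero, add_zero]
  have hstart : udelta δ (p2 (γ 0)) = 0 := by
    unfold udelta p2
    simp only [hγdef]
    have : (((c + v) * 0 : ℝ) : AddCircle (1:ℝ)) = 0 := by norm_num
    rw [show ((c + v) * 0 : ℝ) = 0 by ring]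
    have hn : ‖((0:ℝ) : AddCircle (1:ℝ)) - ((1/2 : ℝ) : AddCircle (1:ℝ))‖ = 1/2 := by
      rw [show ((0:ℝ) : AddCircle (1:ℝ)) = 0 from rfl, zero_sub, norm_neg, norm_half]
    rw [hn]
    exact max_eq_right (by linarith)
  have haction : actionA c γ 0 t = t * (v ^ 2 / 2) := by
    unfold actionA
    rw [hderiv]
    have : ∀ s : ℝ, La c (γ s) ((0 : ℝ), c + v) = v ^ 2 / 2 := by
      intro s
      unfold La
      simp [hγdef]
      ring
    simp only [this]
    rw [intervalIntegral.integral_const]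
    simp
  have hvb : |v| ≤ 1 / (2 * t) := by
    have h1 : |1 / 2 + (K : ℝ) - c * t| ≤ 1 / 2 := by
      have := abs_sub_round (c * t - 1 / 2)
      rw [hK]
      calc |1 / 2 + (round (c * t - 1/2) : ℝ) - c * t|
          = |(c * t - 1/2) - (round (c * t - 1/2) : ℝ)| := by rw [abs_sub_comm]; ring_nf
        _ ≤ 1 / 2 := this
    rw [hv, abs_div, abs_of_pos ht]
    rw [div_le_div_iff₀ ht (by linarith)]
    nlinarith
  refine ⟨udelta δ (p2 (γ 0)) + actionA c γ 0 t, ⟨γ, hpc1, hend, rfl⟩, ?_⟩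
  rw [hstart, haction, zero_add]
  have hv2 : v ^ 2 ≤ (1 / (2 * t)) ^ 2 := by
    rw [← sq_abs]
    exact pow_le_pow_left₀ (abs_nonneg v) hvb 2
  have h1 : |v| * (2 * t) ≤ 1 := (le_div_iff₀ (by positivity)).mp hvb
  have hx0 : 0 ≤ |v| * (2 * t) := mul_nonneg (abs_nonneg v) (by linarith)
  have h2 : (|v| * (2 * t)) ^ 2 ≤ 1 := by nlinarith [mul_nonneg (sub_nonneg.2 h1) hx0]
  have h2' : v ^ 2 * (2 * t) ^ 2 ≤ 1 := by rw [← sq_abs v, ← mul_pow]; exact h2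
  rw [inv_eq_one_div, le_div_iff₀ (by positivity : (0:ℝ) < 8 * t)]
  nlinarith [h2']


lemma set_lb {c δ : ℝ} (hδ0 : 0 < δ) (hδ : δ < 1 / 2) {t : ℝ} (ht1 : 1 ≤ t)
    (k : ℤ) (hk : c * t = k) {A : ℝ}
    (hA : A ∈ {A : ℝ | ∃ γ : ℝ → ℝ × ℝ, PiecewiseC1On γ 0 t ∧ p2 (γ t) = p2 (0, 1 / 2) ∧
      A = udelta δ (p2 (γ 0)) + actionA c γ 0 t}) :
    δ ^ 2 / (2 * t) ≤ A := by
  obtain ⟨γ, hγ, hend, rfl⟩ := hA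
  have ht : 0 < t := lt_of_lt_of_le one_pos ht1
  set D : ℝ := (γ t).2 - (γ 0).2 - c * t with hD
  have hact : D ^ 2 / (2 * t) ≤ actionA c γ 0 t := action_lb c ht hγ
  have hy : (((γ t).2 : ℝ) : AddCircle (1:ℝ)) = ((1 / 2 : ℝ) : AddCircle (1:ℝ)) :=
    congrArg Prod.snd hend
  have hstart : (((γ 0).2 : ℝ) : AddCircle (1:ℝ)) =
      ((1 / 2 : ℝ) : AddCircle (1:ℝ)) - ((D : ℝ) : AddCircle (1:ℝ)) := by
    have h0 : (γ 0).2 = (γ t).2 - D - c * t := by rw [hD]; ring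
    rw [h0, hk]
    rw [show ((γ t).2 - D - (k:ℝ) : ℝ) = ((γ t).2 - D) - (k:ℝ) from rfl]
    rw [QuotientAddGroup.mk_sub, QuotientAddGroup.mk_sub, coe_int_zero, sub_zero, hy]
  set s : ℝ := ‖((D : ℝ) : AddCircle (1:ℝ))‖ with hs
  have hs0 : 0 ≤ s := norm_nonneg _
  have hsD : s ≤ |D| := norm_addCircle_le D
  have hu : δ - s ≤ udelta δ (p2 (γ 0)) := by
    unfold udelta p2
    have : ((((γ 0).2 : ℝ) : AddCircle (1:ℝ)) - ((1/2 : ℝ) : AddCircle (1:ℝ))) =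
        -((D : ℝ) : AddCircle (1:ℝ)) := by rw [hstart]; abel
    calc δ - s = δ - ‖-((D : ℝ) : AddCircle (1:ℝ))‖ := by rw [norm_neg]
      _ ≤ max (δ - ‖(((γ 0).2 : ℝ) : AddCircle (1:ℝ)) - ((1/2 : ℝ) : AddCircle (1:ℝ))‖) 0 := by
          rw [this]; exact le_max_left _ _
  have hs2 : s ^ 2 ≤ D ^ 2 := by
    rw [← sq_abs D]
    exact pow_le_pow_left₀ hs0 hsD 2
  have hu0 : 0 ≤ udelta δ (p2 (γ 0)) := le_max_right _ _
  have h2t : (0:ℝ) < 2 * t := by linarith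
  by_cases hcase : δ ≤ s
  · have hDd : δ ^ 2 ≤ D ^ 2 := le_trans (by nlinarith) hs2
    have h1 : δ ^ 2 / (2 * t) ≤ D ^ 2 / (2 * t) := (div_le_div_iff_of_pos_right h2t).mpr hDd
    linarith
  · push_neg at hcase
    have key : δ ^ 2 ≤ s ^ 2 + (δ - s) * (2 * t) := by nlinarith
    have h1 : δ ^ 2 / (2 * t) ≤ (s ^ 2 + (δ - s) * (2 * t)) / (2 * t) :=
      (div_le_div_iff_of_pos_right h2t).mpr key
    have h2 : (s ^ 2 + (δ - s) * (2 * t)) / (2 * t) = s ^ 2 / (2 * t) + (δ - s) := by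
      field_simp
    have h3 : s ^ 2 / (2 * t) ≤ D ^ 2 / (2 * t) := (div_le_div_iff_of_pos_right h2t).mpr hs2
    linarith

end AuxProofs

/-- For `L_a` on `𝕋²` and `u_δ` with `0 < δ < 1/2`:
`T_t u_δ (π(0,1/2)) → 0` as `t → +∞`, yet there is a sequence `t_n → +∞` with
`T_{t_n} u_δ (π(0,1/2)) ≥ δ²/(32 t_n)` for every `n`; hence the convergence of
the Lax–Oleinik semigroup at `π(0,1/2)` is not faster than `O(1/t)`. -/
theorem laxOleinik_rate_not_better_than_one_over_t (c δ : ℝ)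
    (hδ0 : 0 < δ) (hδ : δ < 1 / 2) :
    Filter.Tendsto (fun t : ℝ => Tlo c t (udelta δ) (p2 (0, 1 / 2)))
      Filter.atTop (nhds 0) ∧
    ∃ ts : ℕ → ℝ, Filter.Tendsto ts Filter.atTop Filter.atTop ∧
      ∀ n : ℕ, 0 < ts n ∧
        δ ^ 2 / (32 * ts n) ≤ Tlo c (ts n) (udelta δ) (p2 (0, 1 / 2)) := by
  have hub : ∀ t : ℝ, 0 < t → Tlo c t (udelta δ) (p2 (0, 1 / 2)) ≤ (8 * t)⁻¹ := by
    intro t ht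
    obtain ⟨A, hA, hAle⟩ := exists_cheap c δ hδ ht
    exact le_trans (csInf_le ⟨0, fun x hx => set_nonneg ht.le hx⟩ hA) hAle
  have hlb0 : ∀ t : ℝ, 0 ≤ t → 0 ≤ Tlo c t (udelta δ) (p2 (0, 1 / 2)) := by
    intro t ht
    exact Real.sInf_nonneg (fun x hx => set_nonneg ht hx)
  have hbound : Filter.Tendsto (fun t : ℝ => (8 * t)⁻¹) Filter.atTop (nhds (0:ℝ)) := by
    apply Filter.Tendsto.inv_tendsto_atTop
    exact Filter.Tendsto.const_mul_atTop (by norm_num : (0:ℝ) < 8) tendsto_id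
  have hlow : ∀ᶠ t : ℝ in Filter.atTop,
      (fun _ : ℝ => (0:ℝ)) t ≤ Tlo c t (udelta δ) (p2 (0, 1 / 2)) := by
    filter_upwards [eventually_ge_atTop (0:ℝ)] with t ht
    exact hlb0 t ht
  have hupp : ∀ᶠ t : ℝ in Filter.atTop,
      Tlo c t (udelta δ) (p2 (0, 1 / 2)) ≤ (fun t : ℝ => (8 * t)⁻¹) t := by
    filter_upwards [eventually_gt_atTop (0:ℝ)] with t ht
    exact hub t ht
  constructor
  · exact tendsto_of_tendsto_of_tendsto_of_le_of_le' tendsto_const_nhds hbound hlow hupp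
  · set m : ℕ := ⌈|c|⌉₊ with hm
    refine ⟨fun n => if c = 0 then (n:ℝ) + 1 else ((n:ℝ) + 1 + m) / |c|, ?_, ?_⟩
    · by_cases hc : c = 0
      · simp only [hc, if_true]
        exact tendsto_atTop_add_const_right _ _ tendsto_natCast_atTop_atTop
      · simp only [hc, if_false]
        apply Filter.Tendsto.atTop_div_const (abs_pos.2 hc)
        exact tendsto_atTop_add_const_right _ _
          (tendsto_atTop_add_const_right _ _ tendsto_natCast_atTop_atTop)
    · intro n
      have hts : ∃ tn : ℝ, (if c = 0 then (n:ℝ) + 1 else ((n:ℝ) + 1 + m) / |c|) = tn ∧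
          1 ≤ tn ∧ ∃ k : ℤ, c * tn = k := by
        by_cases hc : c = 0
        · refine ⟨(n:ℝ) + 1, by simp [hc], ?_, 0, by simp [hc]⟩
          have : (0:ℝ) ≤ (n:ℝ) := Nat.cast_nonneg n
          linarith
        · have hc0 : (0:ℝ) < |c| := abs_pos.2 hc
          have hmle : |c| ≤ (m : ℝ) := Nat.le_ceil _
          refine ⟨((n:ℝ) + 1 + m) / |c|, by simp [hc], ?_, ?_⟩
          · rw [le_div_iff₀ hc0]
            have : (0:ℝ) ≤ (n:ℝ) := Nat.cast_nonneg n
            linarith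
          · rcases lt_or_gt_of_ne hc with hneg | hpos
            · refine ⟨-((n:ℤ) + 1 + m), ?_⟩
              rw [abs_of_neg hneg]
              push_cast
              rw [← mul_div_assoc, div_eq_iff (show (-c) ≠ 0 from ne_of_gt (neg_pos.2 hneg))]
              ring
            · refine ⟨(n:ℤ) + 1 + m, ?_⟩
              rw [abs_of_pos hpos]
              push_cast
              rw [← mul_div_assoc, div_eq_iff (show c ≠ 0 from hc)]
              ring
      obtain ⟨tn, htn, h1, k, hk⟩ := hts
      simp only [htn]
      have ht : 0 < tn := lt_of_lt_of_le one_pos h1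
      constructor
      · exact ht
      · have hne : {A : ℝ | ∃ γ : ℝ → ℝ × ℝ, PiecewiseC1On γ 0 tn ∧
            p2 (γ tn) = p2 (0, 1 / 2) ∧
            A = udelta δ (p2 (γ 0)) + actionA c γ 0 tn}.Nonempty := by
          obtain ⟨A, hA, _⟩ := exists_cheap c δ hδ ht
          exact ⟨A, hA⟩
        have hge : δ ^ 2 / (2 * tn) ≤ Tlo c tn (udelta δ) (p2 (0, 1 / 2)) :=
          le_csInf hne (fun b hb => set_lb hδ0 hδ h1 k hk hb)
        have hcmp : δ ^ 2 / (32 * tn) ≤ δ ^ 2 / (2 * tn) := by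
          apply div_le_div_of_nonneg_left (sq_nonneg δ) (by linarith) (by linarith)
        linarith
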